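/- For every natural number n, the n-ary generalized C combinator admits the alternative encoding C_n =βη (S (S (K S) (S (K K) S_n)) (K K_n)). -/

import Mathlib

namespace LC

/-- Untyped λ-terms, de Bruijn indices. -/
inductive Tm : Type
  | var : ℕ → Tm
  | app : Tm → Tm → Tm
  | lam : Tm → Tm
  deriving DecidableEq

namespace Tm

/-- Shift the free variables ≥ c up by one. -/
def lift (c : ℕ) : Tm → Tm
  | var n => if n < c then var n else var (n + 1)
  | app a b => app (lift c a) (lift c b)
  | lam a => lam (lift (c + 1) a)

/-- Substitute `s` for the free variable `k`. -/
def subst (k : ℕ) (s : Tm) : Tm → Tm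
  | var n => if n = k then s else if k < n then var (n - 1) else var n
  | app a b => app (subst k s a) (subst k s b)
  | lam a => lam (subst (k + 1) (lift 0 s) a)

/-- One-step βη-reduction (with congruence closure). -/
inductive Step : Tm → Tm → Prop
  | beta (a b : Tm) : Step (app (lam a) b) (subst 0 b a)
  | eta (a : Tm) : Step (lam (app (lift 0 a) (var 0))) a
  | appL {a a' : Tm} (b : Tm) : Step a a' → Step (app a b) (app a' b)
  | appR (a : Tm) {b b' : Tm} : Step b b' → Step (app a b) (app a b')
  | lamCongr {a a' : Tm} : Step a a' → Step (lam a) (lam a')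

/-- βη-equivalence: the equivalence relation generated by βη-reduction. -/
def BetaEta : Tm → Tm → Prop := Relation.EqvGen Step

/-- Multi-step βη-reduction: reflexive-transitive closure of βη-reduction. -/
def Reduces : Tm → Tm → Prop := Relation.ReflTransGen Step

/-- I = λx.x -/
def I : Tm := lam (var 0)
/-- K = λxy.x -/
def K : Tm := lam (lam (var 1))
/-- B = λxyz.(x (y z)) -/
def B : Tm := lam (lam (lam (app (var 2) (app (var 1) (var 0)))))
/-- C = λxyz.(x z y) -/
def C : Tm := lam (lam (lam (app (app (var 2) (var 0)) (var 1))))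
/-- S = λxyz.(x z (y z)) -/
def S : Tm := lam (lam (lam (app (app (var 2) (var 0)) (app (var 1) (var 0)))))

/-- body of the n-th Church numeral: s (s ⋯ (s z)⋯), n times. -/
def churchBody : ℕ → Tm
  | 0 => var 0
  | n + 1 => app (var 1) (churchBody n)

/-- The n-th Church numeral c_n = λsz.(s (s ⋯ (s z)⋯)). -/
def church (n : ℕ) : Tm := lam (lam (churchBody n))

/-- n nested λ-abstractions. -/
def lamN : ℕ → Tm → Tm
  | 0, t => t
  | n + 1, t => lam (lamN n t)

/-- Shift all free variables up by n. -/
def liftN (n : ℕ) (t : Tm) : Tm := (lift 0)^[n] t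

/-- t (var (a+k-1)) ⋯ (var (a+1)) (var a) : left-associated application of t
to k variables with descending indices. -/
def appVars (t : Tm) (a k : ℕ) : Tm :=
  ((List.range k).reverse).foldl (fun s i => app s (var (a + i))) t

/-- t (var a) (var (a+1)) ⋯ (var (a+k-1)) : left-associated application of t
to k variables with ascending indices. -/
def appVarsAsc (t : Tm) (a k : ℕ) : Tm :=
  (List.range k).foldl (fun s i => app s (var (a + i))) t

/-- Left-associated application of t to a list of terms. -/
def appList (t : Tm) (l : List Tm) : Tm := l.foldl app t

/-- K_n = λp x_1…x_n. p -/
def Kn (n : ℕ) : Tm := lamN (n + 1) (var n)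
/-- S_n = λpq x_1…x_n.(p x_1⋯x_n (q x_1⋯x_n)) -/
def Sn (n : ℕ) : Tm :=
  lamN (n + 2) (app (appVars (var (n + 1)) 0 n) (appVars (var n) 0 n))
/-- B_n = λpq x_1…x_n.(p (q x_1⋯x_n)) -/
def Bn (n : ℕ) : Tm := lamN (n + 2) (app (var (n + 1)) (appVars (var n) 0 n))
/-- C_n = λpq x_1…x_n.(p x_1⋯x_n q) -/
def Cn (n : ℕ) : Tm := lamN (n + 2) (app (appVars (var (n + 1)) 0 n) (var n))


/-! ### Auxiliary lemmas -/

lemma lamN_succ (n : ℕ) (t : Tm) : lamN (n + 1) t = lam (lamN n t) := rfl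

@[simp] lemma appVars_zero (t : Tm) (a : ℕ) : appVars t a 0 = t := rfl

lemma appVars_succ (t : Tm) (a m : ℕ) :
    appVars t a (m + 1) = appVars (app t (var (a + m))) a m := by
  simp [appVars, List.range_succ]

lemma lift_appVars (c : ℕ) (t : Tm) (a m : ℕ) (h : a + m ≤ c) :
    lift c (appVars t a m) = appVars (lift c t) a m := by
  induction m generalizing t with
  | zero => simp
  | succ m ih =>
      rw [appVars_succ, appVars_succ, ih _ (by omega)]
      simp only [lift]
      rw [if_pos (by omega)]

lemma subst_appVars (k : ℕ) (s : Tm) (t : Tm) (a m : ℕ) (h : a + m ≤ k) :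
    subst k s (appVars t a m) = appVars (subst k s t) a m := by
  induction m generalizing t with
  | zero => simp
  | succ m ih =>
      rw [appVars_succ, appVars_succ, ih _ (by omega)]
      simp only [subst]
      rw [if_neg (by omega), if_neg (by omega)]

lemma lift_lamN (c m : ℕ) (t : Tm) : lift c (lamN m t) = lamN m (lift (c + m) t) := by
  induction m generalizing c with
  | zero => rfl
  | succ m ih =>
      rw [lamN_succ, lamN_succ]
      simp only [lift]
      rw [ih, show c + 1 + m = c + (m + 1) from by omega]

@[simp] lemma liftN_zero (t : Tm) : liftN 0 t = t := rfl

lemma liftN_succ (m : ℕ) (t : Tm) : liftN (m + 1) t = liftN m (lift 0 t) := by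
  simp [liftN, Function.iterate_succ_apply]

lemma subst_lamN (k m : ℕ) (s : Tm) (t : Tm) :
    subst k s (lamN m t) = lamN m (subst (k + m) (liftN m s) t) := by
  induction m generalizing k s with
  | zero => rfl
  | succ m ih =>
      rw [lamN_succ, lamN_succ]
      simp only [subst]
      rw [ih, liftN_succ, show k + 1 + m = k + (m + 1) from by omega]

lemma liftN_var (m j : ℕ) : liftN m (var j) = var (j + m) := by
  induction m generalizing j with
  | zero => rfl
  | succ m ih =>
      rw [liftN_succ]
      simp only [lift]
      rw [if_neg (by omega), ih]
      congr 1
      omega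

lemma liftN_lamN_var (m p j : ℕ) (h : p ≤ j) :
    liftN m (lamN p (var j)) = lamN p (var (j + m)) := by
  induction m generalizing j with
  | zero => rfl
  | succ m ih =>
      rw [liftN_succ, lift_lamN]
      simp only [lift]
      rw [if_neg (by omega), ih _ (by omega)]
      congr 2
      omega

@[simp high] lemma lift_Sn (c n : ℕ) : lift c (Sn n) = Sn n := by
  unfold Sn
  rw [lift_lamN]
  congr 1
  simp only [lift]
  rw [lift_appVars _ _ _ _ (by omega), lift_appVars _ _ _ _ (by omega)]
  simp only [lift]
  rw [if_pos (by omega), if_pos (by omega)]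

@[simp high] lemma subst_Sn (k n : ℕ) (s : Tm) : subst k s (Sn n) = Sn n := by
  unfold Sn
  rw [subst_lamN]
  congr 1
  simp only [subst]
  rw [subst_appVars _ _ _ _ _ (by omega), subst_appVars _ _ _ _ _ (by omega)]
  simp only [subst]
  rw [if_neg (by omega), if_neg (by omega), if_neg (by omega), if_neg (by omega)]

@[simp high] lemma lift_Kn (c n : ℕ) : lift c (Kn n) = Kn n := by
  unfold Kn
  rw [lift_lamN]
  congr 1
  simp only [lift]
  rw [if_pos (by omega)]

@[simp high] lemma subst_Kn (k n : ℕ) (s : Tm) : subst k s (Kn n) = Kn n := by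
  unfold Kn
  rw [subst_lamN]
  congr 1
  simp only [subst]
  rw [if_neg (by omega), if_neg (by omega)]

lemma step_beta {a b c : Tm} (h : subst 0 b a = c) : Step (app (lam a) b) c :=
  h ▸ Step.beta a b

lemma red_appL {a a' : Tm} (b : Tm) (h : Reduces a a') :
    Reduces (app a b) (app a' b) := by
  induction h with
  | refl => exact Relation.ReflTransGen.refl
  | tail _ h2 ih => exact Relation.ReflTransGen.tail ih (Step.appL _ h2)

lemma red_appR (a : Tm) {b b' : Tm} (h : Reduces b b') :
    Reduces (app a b) (app a b') := by
  induction h with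
  | refl => exact Relation.ReflTransGen.refl
  | tail _ h2 ih => exact Relation.ReflTransGen.tail ih (Step.appR _ h2)

lemma red_lam {a a' : Tm} (h : Reduces a a') : Reduces (lam a) (lam a') := by
  induction h with
  | refl => exact Relation.ReflTransGen.refl
  | tail _ h2 ih => exact Relation.ReflTransGen.tail ih (Step.lamCongr h2)

lemma red_lamN (m : ℕ) {a a' : Tm} (h : Reduces a a') :
    Reduces (lamN m a) (lamN m a') := by
  induction m with
  | zero => exact h
  | succ m ih => rw [lamN_succ, lamN_succ]; exact red_lam ih

lemma red_appVars {t t' : Tm} (a m : ℕ) (h : Reduces t t') :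
    Reduces (appVars t a m) (appVars t' a m) := by
  induction m generalizing t t' with
  | zero => simpa using h
  | succ m ih =>
      rw [appVars_succ, appVars_succ]
      exact ih (red_appL _ h)

/-- Key lemma: (λy₁…yₘ. var (m+c)) applied to m variables reduces to var c. -/
lemma red_appVars_lamN_var (m c a : ℕ) :
    Reduces (appVars (lamN m (var (m + c))) a m) (var c) := by
  induction m generalizing a with
  | zero => simp only [Nat.zero_add]; exact Relation.ReflTransGen.refl
  | succ m ih =>
      rw [appVars_succ]
      refine Relation.ReflTransGen.trans (red_appVars a m ?_) (ih a)
      rw [lamN_succ]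
      refine Relation.ReflTransGen.single (step_beta ?_)
      rw [subst_lamN, liftN_var]
      congr 1
      simp only [subst]
      rw [if_neg (by omega), if_pos (by omega)]
      congr 1
      omega

lemma reduces_betaEta {a b : Tm} (h : Reduces a b) : BetaEta a b := by
  induction h with
  | refl => exact Relation.EqvGen.refl _
  | tail _ h2 ih =>
      exact Relation.EqvGen.trans _ _ _ ih (Relation.EqvGen.rel _ _ h2)

lemma red_Kn_var0 (n : ℕ) : Reduces (app (Kn n) (var 0)) (lamN n (var n)) := by
  have h : Kn n = lam (lamN n (var n)) := rfl
  rw [h]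
  refine Relation.ReflTransGen.single (step_beta ?_)
  rw [subst_lamN, liftN_var]
  simp [subst]

lemma step_Sn_var1 (n : ℕ) :
    Step (app (Sn n) (var 1))
      (lam (lamN n (app (appVars (var (n + 2)) 0 n) (appVars (var n) 0 n)))) := by
  have h : Sn n = lam (lamN (n + 1) (app (appVars (var (n + 1)) 0 n) (appVars (var n) 0 n))) := rfl
  have h2 : lam (lamN n (app (appVars (var (n + 2)) 0 n) (appVars (var n) 0 n)))
      = lamN (n + 1) (app (appVars (var (n + 2)) 0 n) (appVars (var n) 0 n)) := rfl
  rw [h, h2]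
  refine step_beta ?_
  rw [subst_lamN, liftN_var]
  simp only [Nat.zero_add]
  rw [show 1 + (n + 1) = n + 2 from by omega]
  congr 1
  simp only [subst]
  rw [subst_appVars _ _ _ _ _ (by omega), subst_appVars _ _ _ _ _ (by omega)]
  simp only [subst]
  split_ifs <;> first | rfl | omega

lemma step_inner (n : ℕ) :
    Step
      (app (lam (lamN n (app (appVars (var (n + 2)) 0 n) (appVars (var n) 0 n))))
        (lamN n (var n)))
      (lamN n (app (appVars (var (n + 1)) 0 n) (appVars (lamN n (var (n + n))) 0 n))) := by
  refine step_beta ?_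
  rw [subst_lamN, liftN_lamN_var _ _ _ (le_refl n)]
  simp only [Nat.zero_add]
  congr 1
  simp only [subst]
  rw [subst_appVars _ _ _ _ _ (by omega), subst_appVars _ _ _ _ _ (by omega)]
  simp only [subst]
  rw [show n + 2 - 1 = n + 1 from by omega]
  split_ifs <;> first | rfl | omega

attribute [irreducible] Sn Kn

local infix:50 " ⟶* " => Reduces

instance : Trans Reduces Reduces Reduces := ⟨Relation.ReflTransGen.trans⟩

/-- C_n =βη (S (S (K S) (S (K K) S_n)) (K K_n)). -/
theorem Cn_alt_encoding (n : ℕ) :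
    BetaEta (Cn n)
      (app (app S (app (app S (app K S)) (app (app S (app K K)) (Sn n))))
        (app K (Kn n))) := by
  have hc : Cn n = lam (lam (lamN n (app (appVars (var (n + 1)) 0 n) (var n)))) := rfl
  have main : Reduces
      (app (app S (app (app S (app K S)) (app (app S (app K K)) (Sn n))))
        (app K (Kn n))) (Cn n) := by
    calc app (app S (app (app S (app K S)) (app (app S (app K K)) (Sn n)))) (app K (Kn n))
        ⟶* app (lam (lam (app (app (app (app S (app K S)) (app (app S (app K K)) (Sn n))) (var 0)) (app (var 1) (var 0))))) (app K (Kn n)) :=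
          red_appL _ (Relation.ReflTransGen.single (step_beta (by simp [subst, lift, S, K])))
      _ ⟶* lam (app (app (app (app S (app K S)) (app (app S (app K K)) (Sn n))) (var 0)) (app (app K (Kn n)) (var 0))) :=
          Relation.ReflTransGen.single (step_beta (by simp [subst, lift, S, K]))
      _ ⟶* lam (app (app (app (app S (app K S)) (app (app S (app K K)) (Sn n))) (var 0)) (app (lam (Kn n)) (var 0))) :=
          red_lam (red_appR _ (red_appL _ (Relation.ReflTransGen.single (step_beta (by simp [subst, lift, K])))))
      _ ⟶* lam (app (app (app (app S (app K S)) (app (app S (app K K)) (Sn n))) (var 0)) (Kn n)) :=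
          red_lam (red_appR _ (Relation.ReflTransGen.single (step_beta (by simp [subst]))))
      _ ⟶* lam (app (app (app (app S (lam S)) (app (app S (app K K)) (Sn n))) (var 0)) (Kn n)) :=
          red_lam (red_appL _ (red_appL _ (red_appL _ (red_appR _ (Relation.ReflTransGen.single (step_beta (by simp [subst, lift, S, K])))))))
      _ ⟶* lam (app (app (app (lam (lam (app (app (lam S) (var 0)) (app (var 1) (var 0))))) (app (app S (app K K)) (Sn n))) (var 0)) (Kn n)) :=
          red_lam (red_appL _ (red_appL _ (red_appL _ (Relation.ReflTransGen.single (step_beta (by simp [subst, lift, S, K]))))))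
      _ ⟶* lam (app (app (lam (app (app (lam S) (var 0)) (app (app (app S (app K K)) (Sn n)) (var 0)))) (var 0)) (Kn n)) :=
          red_lam (red_appL _ (red_appL _ (Relation.ReflTransGen.single (step_beta (by simp [subst, lift, S, K])))))
      _ ⟶* lam (app (app (app (lam S) (var 0)) (app (app (app S (app K K)) (Sn n)) (var 0))) (Kn n)) :=
          red_lam (red_appL _ (Relation.ReflTransGen.single (step_beta (by simp [subst, lift, S, K]))))
      _ ⟶* lam (app (app S (app (app (app S (app K K)) (Sn n)) (var 0))) (Kn n)) :=
          red_lam (red_appL _ (red_appL _ (Relation.ReflTransGen.single (step_beta (by simp [subst, lift, S])))))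
      _ ⟶* lam (app (app S (app (app (app S (lam K)) (Sn n)) (var 0))) (Kn n)) :=
          red_lam (red_appL _ (red_appR _ (red_appL _ (red_appL _ (red_appR _ (Relation.ReflTransGen.single (step_beta (by simp [subst, lift, K]))))))))
      _ ⟶* lam (app (app S (app (app (lam (lam (app (app (lam K) (var 0)) (app (var 1) (var 0))))) (Sn n)) (var 0))) (Kn n)) :=
          red_lam (red_appL _ (red_appR _ (red_appL _ (red_appL _ (Relation.ReflTransGen.single (step_beta (by simp [subst, lift, S, K])))))))
      _ ⟶* lam (app (app S (app (lam (app (app (lam K) (var 0)) (app (Sn n) (var 0)))) (var 0))) (Kn n)) :=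
          red_lam (red_appL _ (red_appR _ (red_appL _ (Relation.ReflTransGen.single (step_beta (by simp [subst, lift, K]))))))
      _ ⟶* lam (app (app S (app (app (lam K) (var 0)) (app (Sn n) (var 0)))) (Kn n)) :=
          red_lam (red_appL _ (red_appR _ (Relation.ReflTransGen.single (step_beta (by simp [subst, lift, K])))))
      _ ⟶* lam (app (app S (app K (app (Sn n) (var 0)))) (Kn n)) :=
          red_lam (red_appL _ (red_appR _ (red_appL _ (Relation.ReflTransGen.single (step_beta (by simp [subst, lift, K]))))))
      _ ⟶* lam (app (app S (lam (app (Sn n) (var 1)))) (Kn n)) :=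
          red_lam (red_appL _ (red_appR _ (Relation.ReflTransGen.single (step_beta (by simp [subst, lift, K])))))
      _ ⟶* lam (app (lam (lam (app (app (lam (app (Sn n) (var 3))) (var 0)) (app (var 1) (var 0))))) (Kn n)) :=
          red_lam (red_appL _ (Relation.ReflTransGen.single (step_beta (by simp [subst, lift, S]))))
      _ ⟶* lam (lam (app (app (lam (app (Sn n) (var 2))) (var 0)) (app (Kn n) (var 0)))) :=
          red_lam (Relation.ReflTransGen.single (step_beta (by simp [subst, lift])))
      _ ⟶* lam (lam (app (app (Sn n) (var 1)) (app (Kn n) (var 0)))) :=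
          red_lam (red_lam (red_appL _ (Relation.ReflTransGen.single (step_beta (by simp [subst])))))
      _ ⟶* lam (lam (app (app (Sn n) (var 1)) (lamN n (var n)))) :=
          red_lam (red_lam (red_appR _ (red_Kn_var0 n)))
      _ ⟶* lam (lam (app (lam (lamN n (app (appVars (var (n + 2)) 0 n) (appVars (var n) 0 n)))) (lamN n (var n)))) :=
          red_lam (red_lam (red_appL _ (Relation.ReflTransGen.single (step_Sn_var1 n))))
      _ ⟶* lam (lam (lamN n (app (appVars (var (n + 1)) 0 n) (appVars (lamN n (var (n + n))) 0 n)))) :=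
          red_lam (red_lam (Relation.ReflTransGen.single (step_inner n)))
      _ ⟶* Cn n := by
          rw [hc]
          exact red_lam (red_lam (red_lamN n (red_appR _ (red_appVars_lamN_var n n 0))))
  exact Relation.EqvGen.symm _ _ (reduces_betaEta main)

end Tm
end LC
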